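/- The Fourier conjugate of the Legendre operator satisfies ℱ L ℱ^{-1} = -|p|²(1+Δ) - 2 p·∇ on Schwartz functions; equivalently ℱ L ℱ^{-1} = L - (Δ + 1) + M, where M is multiplication by (1-|p|²). -/

import Mathlib

open MeasureTheory Filter Topology
noncomputable section

/-- Euclidean space ℝ^d. -/
abbrev Ed (d : ℕ) := EuclideanSpace ℝ (Fin d)

/-- Partial derivative ∂ᵢ of a complex-valued function. -/
def pd {d : ℕ} (i : Fin d) (f : Ed d → ℂ) (x : Ed d) : ℂ :=
  fderiv ℝ f x (EuclideanSpace.single i 1)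

/-- Laplacian Δ = ∑ᵢ ∂ᵢ². -/
def lap {d : ℕ} (f : Ed d → ℂ) (x : Ed d) : ℂ := ∑ i, pd i (pd i f) x

/-- Radial derivative r∂ᵣ = ∑ᵢ xᵢ ∂ᵢ. -/
def rdr {d : ℕ} (f : Ed d → ℂ) (x : Ed d) : ℂ := ∑ i, (x i : ℂ) * pd i f x

/-- Legendre operator L f = ∇·((1-|x|²)∇f). -/
def legendreOp {d : ℕ} (f : Ed d → ℂ) (x : Ed d) : ℂ :=
  ∑ i, pd i (fun y => ((1 - ‖y‖ ^ 2 : ℝ) : ℂ) * pd i f y) x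

/-- Prolate operator W f = L f - |x|² f. -/
def prolateOp {d : ℕ} (f : Ed d → ℂ) (x : Ed d) : ℂ :=
  legendreOp f x - ((‖x‖ ^ 2 : ℝ) : ℂ) * f x

/-- The Fourier transform ℱf(p) = (2π)^{-d/2} ∫ e^{-i x·p} f(x) dx. -/
def FT {d : ℕ} (f : Ed d → ℂ) (p : Ed d) : ℂ :=
  (((2 * Real.pi) ^ (-(d : ℝ) / 2) : ℝ) : ℂ) *
    ∫ x : Ed d, Complex.exp (-Complex.I * ((inner ℝ x p : ℝ) : ℂ)) * f x

open FourierTransform Real Complex SchwartzMap VectorFourier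
open scoped RealInnerProductSpace

variable {d : ℕ}

def mS (i : Fin d) : SchwartzMap (Ed d) ℂ →L[ℝ] SchwartzMap (Ed d) ℂ :=
  SchwartzMap.bilinLeftCLM ((ContinuousLinearMap.lsmul ℝ ℝ : ℝ →L[ℝ] ℂ →L[ℝ] ℂ).flip)
    (EuclideanSpace.proj i : Ed d →L[ℝ] ℝ).hasTemperateGrowth

lemma mS_apply (i : Fin d) (f : SchwartzMap (Ed d) ℂ) (x : Ed d) :
    mS i f x = (x i : ℂ) * f x := by
  simp [mS, SchwartzMap.bilinLeftCLM, SchwartzMap.mkCLM, SchwartzMap.mkLM, Complex.real_smul]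
  rfl

def pdS (i : Fin d) : SchwartzMap (Ed d) ℂ →L[ℝ] SchwartzMap (Ed d) ℂ :=
  LineDeriv.lineDerivOpCLM ℝ (SchwartzMap (Ed d) ℂ) (EuclideanSpace.single i (1 : ℝ))

lemma pdS_apply (i : Fin d) (f : SchwartzMap (Ed d) ℂ) (x : Ed d) :
    pdS i f x = fderiv ℝ f x (EuclideanSpace.single i 1) := rfl

lemma FT_eq (g : Ed d → ℂ) (p : Ed d) :
    FT g p = (((2 * Real.pi) ^ (-(d : ℝ) / 2) : ℝ) : ℂ) *
      𝓕 g ((2 * Real.pi)⁻¹ • p) := by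
  rw [FT, Real.fourier_eq']
  congr 1
  refine integral_congr_ae (Filter.Eventually.of_forall fun x => ?_)
  simp only [smul_eq_mul]
  congr 1
  rw [real_inner_smul_right]
  have h : -2 * π * ((2 * π)⁻¹ * ⟪x, p⟫) = -⟪x, p⟫ := by
    field_simp
  rw [h]
  push_cast
  ring

lemma int_fderiv (f : SchwartzMap (Ed d) ℂ) : Integrable (fderiv ℝ ⇑f) (volume) := by
  have h : (fderiv ℝ ⇑f) = ⇑(SchwartzMap.fderivCLM ℝ (Ed d) ℂ f) := by
    funext x; exact (SchwartzMap.fderivCLM_apply (𝕜 := ℝ) (E := Ed d) (F := ℂ) f x).symm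
  rw [h]; exact (SchwartzMap.fderivCLM ℝ (Ed d) ℂ f).integrable

lemma int_norm_mul (f : SchwartzMap (Ed d) ℂ) :
    Integrable (fun x => ‖x‖ * ‖f x‖) (volume) := by
  simpa using f.integrable_pow_mul volume 1

lemma fourier_const_mul (c : ℂ) (g : Ed d → ℂ) (ξ : Ed d) :
    𝓕 (fun x => c * g x) ξ = c * 𝓕 g ξ := by
  rw [Real.fourier_eq, Real.fourier_eq, ← integral_const_mul]
  refine integral_congr_ae (Filter.Eventually.of_forall fun x => ?_)
  simp only [Circle.smul_def, smul_eq_mul]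
  ring

lemma FT_pd (f : SchwartzMap (Ed d) ℂ) (i : Fin d) (p : Ed d) :
    FT (⇑(pdS i f)) p = Complex.I * (p i) * FT (⇑f) p := by
  rw [FT_eq, FT_eq]
  have h1 : ⇑(pdS i f) = fun x => fderiv ℝ (⇑f) x (EuclideanSpace.single i 1) := rfl
  rw [h1, ← Real.fourier_continuousLinearMap_apply (int_fderiv f),
    Real.fourier_fderiv f.integrable f.differentiable (int_fderiv f),
    fourierSMulRight_apply]
  have h2 : (-(innerSL ℝ)) ((2 * π)⁻¹ • p) (EuclideanSpace.single i 1)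
      = -((2 * π)⁻¹ * p i) := by
    simp [EuclideanSpace.inner_single_right, real_inner_smul_left]
  rw [h2]
  rw [Complex.real_smul, smul_eq_mul]
  push_cast
  have hπ : (π : ℂ) ≠ 0 := by exact_mod_cast Real.pi_ne_zero
  field_simp

lemma fourierSMulRight_int (f : SchwartzMap (Ed d) ℂ) :
    Integrable (fourierSMulRight (innerSL ℝ) ⇑f) volume := by
  refine ((int_norm_mul f).const_mul (2 * π)).mono'
    (f.continuous.aestronglyMeasurable.fourierSMulRight) ?_
  refine Filter.Eventually.of_forall fun x => ?_
  rw [norm_fourierSMulRight, innerSL_apply_norm]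
  simp [mul_assoc, Real.pi_nonneg]

lemma hasFDeriv_FT (f : SchwartzMap (Ed d) ℂ) (p : Ed d) :
    HasFDerivAt (FT ⇑f)
      ((((2 * Real.pi) ^ (-(d : ℝ) / 2) : ℝ) : ℂ) •
        ((𝓕 (fourierSMulRight (innerSL ℝ) ⇑f) ((2 * π)⁻¹ • p)).comp
          (((2 * π)⁻¹ : ℝ) • ContinuousLinearMap.id ℝ (Ed d)))) p := by
  have hσ : HasFDerivAt (fun q : Ed d => (2 * π)⁻¹ • q)
      (((2 * π)⁻¹ : ℝ) • ContinuousLinearMap.id ℝ (Ed d)) p := by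
    exact (((2 * π)⁻¹ : ℝ) • ContinuousLinearMap.id ℝ (Ed d)).hasFDerivAt
  have hF := Real.hasFDerivAt_fourier f.integrable (int_norm_mul f) ((2 * π)⁻¹ • p)
  have hc := (hF.comp p hσ).const_smul (c := (((2 * Real.pi) ^ (-(d : ℝ) / 2) : ℝ) : ℂ))
  have hfun : (fun q => (((2 * Real.pi) ^ (-(d : ℝ) / 2) : ℝ) : ℂ) •
      ((𝓕 ⇑f) ∘ fun q : Ed d => (2 * π)⁻¹ • q) q) = FT ⇑f := by
    funext q
    rw [FT_eq]
    simp [smul_eq_mul]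
  exact hfun ▸ hc

lemma FT_diff (f : SchwartzMap (Ed d) ℂ) : Differentiable ℝ (FT ⇑f) :=
  fun p => (hasFDeriv_FT f p).differentiableAt

lemma pd_FT (f : SchwartzMap (Ed d) ℂ) (i : Fin d) (p : Ed d) :
    pd i (FT ⇑f) p = -Complex.I * FT (⇑(mS i f)) p := by
  rw [pd, (hasFDeriv_FT f p).fderiv]
  simp only [ContinuousLinearMap.coe_smul', Pi.smul_apply, ContinuousLinearMap.coe_comp',
    Function.comp_apply, ContinuousLinearMap.smul_apply, ContinuousLinearMap.id_apply]
  rw [(𝓕 (fourierSMulRight (innerSL ℝ) ⇑f) ((2 * π)⁻¹ • p)).map_smul,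
    Real.fourier_continuousLinearMap_apply (fourierSMulRight_int f)]
  have h1 : (fun x => fourierSMulRight (innerSL ℝ) (⇑f) x (EuclideanSpace.single i 1))
      = fun x => (-(2 * π) * Complex.I) * ((x i : ℂ) * f x) := by
    funext x
    rw [fourierSMulRight_apply]
    have : (innerSL ℝ) x (EuclideanSpace.single i 1) = x i := by
      simp [EuclideanSpace.inner_single_right]
    rw [this]
    simp only [smul_eq_mul, Complex.real_smul]
    push_cast
    ring
  rw [h1, fourier_const_mul]
  have h2 : ⇑(mS i f) = fun x => (x i : ℂ) * f x := funext fun x => mS_apply i f x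
  rw [FT_eq, h2]
  simp only [smul_eq_mul, Complex.real_smul]
  push_cast
  have hπ : (π : ℂ) ≠ 0 := by exact_mod_cast Real.pi_ne_zero
  field_simp

lemma integ_kernel (g : SchwartzMap (Ed d) ℂ) (p : Ed d) :
    Integrable (fun x => Complex.exp (-Complex.I * ((⟪x, p⟫ : ℝ) : ℂ)) * g x) volume := by
  refine g.integrable.bdd_mul (c := 1) ?_ (Filter.Eventually.of_forall fun x => ?_)
  · apply Continuous.aestronglyMeasurable
    exact Complex.continuous_exp.comp
      ((continuous_const).mul (Complex.continuous_ofReal.comp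
        ((continuous_id.inner continuous_const))))
  · rw [Complex.norm_exp]
    simp

lemma FT_add (g h : SchwartzMap (Ed d) ℂ) (p : Ed d) :
    FT (⇑(g + h)) p = FT (⇑g) p + FT (⇑h) p := by
  rw [FT, FT, FT, ← mul_add, ← integral_add (integ_kernel g p) (integ_kernel h p)]
  congr 1
  refine integral_congr_ae (Filter.Eventually.of_forall fun x => ?_)
  simp [SchwartzMap.add_apply]
  ring

lemma FT_const_mul (c : ℂ) (g : Ed d → ℂ) (p : Ed d) :
    FT (fun x => c * g x) p = c * FT g p := by
  rw [FT_eq, FT_eq, fourier_const_mul]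
  ring

lemma FT_smul (c : ℝ) (g : SchwartzMap (Ed d) ℂ) (p : Ed d) :
    FT (⇑(c • g)) p = (c : ℂ) * FT (⇑g) p := by
  have h : ⇑(c • g) = fun x => (c : ℂ) * g x := by
    funext x
    simp [SchwartzMap.smul_apply, Complex.real_smul]
  rw [h, FT_const_mul]

lemma FT_sub (g h : SchwartzMap (Ed d) ℂ) (p : Ed d) :
    FT (⇑(g - h)) p = FT (⇑g) p - FT (⇑h) p := by
  have := FT_add (g - h) h p
  rw [sub_add_cancel] at this
  rw [this]; ring

lemma FT_sum {n : ℕ} (g : Fin n → SchwartzMap (Ed d) ℂ) (p : Ed d) :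
    FT (⇑(∑ j, g j)) p = ∑ j, FT (⇑(g j)) p := by
  induction n with
  | zero =>
      simp only [Finset.univ_eq_empty, Finset.sum_empty]
      rw [FT]
      simp [SchwartzMap.coe_zero]
  | succ n ih =>
      rw [Fin.sum_univ_succ, Fin.sum_univ_succ, FT_add, ih (fun j => g j.succ)]

lemma pdS_mS (i j : Fin d) (g : SchwartzMap (Ed d) ℂ) (x : Ed d) :
    pdS i (mS j g) x = (if i = j then g x else 0) + (x j : ℂ) * pdS i g x := by
  rw [pdS_apply, pdS_apply,
    show ⇑(mS j g) = fun y : Ed d => ((y j : ℝ) : ℂ) * g y from funext fun y => mS_apply j g y]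
  have hc : HasFDerivAt (fun y : Ed d => ((y j : ℝ) : ℂ))
      (Complex.ofRealCLM.comp (EuclideanSpace.proj j : Ed d →L[ℝ] ℝ)) x :=
    (Complex.ofRealCLM.comp (EuclideanSpace.proj j : Ed d →L[ℝ] ℝ)).hasFDerivAt
  have hg : HasFDerivAt (⇑g) (fderiv ℝ (⇑g) x) x := (g.differentiable x).hasFDerivAt
  have h := (hc.mul hg).fderiv
  rw [show (fun y : Ed d => ((y j : ℝ) : ℂ) * g y) = (fun y : Ed d => ((y j : ℝ) : ℂ)) * ⇑g from rfl, h]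
  simp only [ContinuousLinearMap.add_apply, ContinuousLinearMap.coe_smul', Pi.smul_apply,
    ContinuousLinearMap.coe_comp', Function.comp_apply, Complex.ofRealCLM_apply,
    PiLp.proj_apply, smul_eq_mul]
  rw [EuclideanSpace.single_apply]
  split_ifs with h1 h2 h2
  · simp [Complex.real_smul]; ring
  · exact absurd h1.symm h2
  · exact absurd h2.symm h1
  · simp [Complex.real_smul]

lemma mS_pdS_comm (i j : Fin d) (g : SchwartzMap (Ed d) ℂ) :
    mS j (pdS i g) = pdS i (mS j g) - (if i = j then (1 : ℝ) else 0) • g := by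
  ext x
  rw [SchwartzMap.sub_apply, SchwartzMap.smul_apply, mS_apply, pdS_mS]
  split_ifs with h
  · simp [Complex.real_smul]
  · simp

lemma key_comm (i j : Fin d) (f : SchwartzMap (Ed d) ℂ) :
    mS j (mS j (pdS i f)) = pdS i (mS j (mS j f)) - (if i = j then (2 : ℝ) else 0) • mS j f := by
  have h0 := mS_pdS_comm i j f
  have h1 := mS_pdS_comm i j (mS j f)
  rw [h0, map_sub, (mS j).map_smul, h1]
  split_ifs with h
  · rw [show (2 : ℝ) = 1 + 1 by norm_num, add_smul]
    abel
  · simp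

lemma schwartz_sum_apply {n : ℕ} (g : Fin n → SchwartzMap (Ed d) ℂ) (x : Ed d) :
    (∑ j, g j) x = ∑ j, g j x := by
  have h : ⇑(∑ j, g j) = ∑ j, (g j : Ed d → ℂ) := by ext y; simp [Finset.sum_apply]
  calc (∑ j, g j) x = (∑ j, (g j : Ed d → ℂ)) x := congrFun h x
    _ = _ := by rw [Finset.sum_apply]

lemma normsq_coe (y : Ed d) : ((‖y‖ ^ 2 : ℝ) : ℂ) = ∑ j, (y j : ℂ) ^ 2 := by
  rw [EuclideanSpace.norm_eq, Real.sq_sqrt (by positivity)]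
  push_cast
  refine Finset.sum_congr rfl fun j _ => ?_
  norm_cast
  rw [Real.norm_eq_abs, _root_.sq_abs]

lemma legendre_term (f : SchwartzMap (Ed d) ℂ) (i : Fin d) :
    (fun y => ((1 - ‖y‖ ^ 2 : ℝ) : ℂ) * pd i (⇑f) y)
      = ⇑(pdS i f - ∑ j, mS j (mS j (pdS i f))) := by
  funext y
  rw [SchwartzMap.sub_apply, schwartz_sum_apply]
  have h1 : pd i (⇑f) y = pdS i f y := rfl
  have h2 : ∀ j, (mS j (mS j (pdS i f))) y = (y j : ℂ) ^ 2 * pdS i f y := by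
    intro j; rw [mS_apply, mS_apply]; ring
  rw [h1]
  simp only [h2]
  rw [Complex.ofReal_sub, Complex.ofReal_one, normsq_coe, sub_mul, one_mul, Finset.sum_mul]

lemma legendre_coe (f : SchwartzMap (Ed d) ℂ) :
    legendreOp (⇑f) = ⇑(∑ i, pdS i (pdS i f - ∑ j, mS j (mS j (pdS i f)))) := by
  funext x
  rw [legendreOp, schwartz_sum_apply]
  refine Finset.sum_congr rfl fun i _ => ?_
  rw [legendre_term]
  rfl

lemma pd_pd_FT (f : SchwartzMap (Ed d) ℂ) (i j : Fin d) (p : Ed d) :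
    pd j (pd i (FT ⇑f)) p = -FT (⇑(mS j (mS i f))) p := by
  have h : pd i (FT ⇑f) = fun q => -Complex.I * FT (⇑(mS i f)) q := funext fun q => pd_FT f i q
  rw [h, pd, fderiv_const_mul ((FT_diff (mS i f)) p) (-Complex.I)]
  have : pd j (FT ⇑(mS i f)) p = -Complex.I * FT (⇑(mS j (mS i f))) p := pd_FT (mS i f) j p
  rw [pd] at this
  simp only [ContinuousLinearMap.coe_smul', Pi.smul_apply, smul_eq_mul, this]
  rw [← mul_assoc, neg_mul_neg, Complex.I_mul_I, neg_one_mul]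

lemma lap_FT (f : SchwartzMap (Ed d) ℂ) (p : Ed d) :
    lap (FT ⇑f) p = -FT (⇑(∑ j, mS j (mS j f))) p := by
  rw [lap, FT_sum]
  simp only [pd_pd_FT]
  rw [← Finset.sum_neg_distrib]

lemma pd_one_sub_normsq (u : Ed d → ℂ) (p : Ed d) (hu : DifferentiableAt ℝ u p) (i : Fin d) :
    pd i (fun q => ((1 - ‖q‖ ^ 2 : ℝ) : ℂ) * u q) p
      = (-2 * (p i : ℂ)) * u p + ((1 - ‖p‖ ^ 2 : ℝ) : ℂ) * pd i u p := by
  have hrw : (fun q : Ed d => ((1 - ‖q‖ ^ 2 : ℝ) : ℂ))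
      = fun q => 1 - ∑ j, ((q j : ℂ) * (q j : ℂ)) := by
    funext q
    rw [Complex.ofReal_sub, Complex.ofReal_one, normsq_coe]
    simp [sq]
  have hj : ∀ j : Fin d, HasFDerivAt (fun q : Ed d => (q j : ℂ) * (q j : ℂ))
      ((p j : ℂ) • (Complex.ofRealCLM.comp (EuclideanSpace.proj j : Ed d →L[ℝ] ℝ))
        + (p j : ℂ) • (Complex.ofRealCLM.comp (EuclideanSpace.proj j : Ed d →L[ℝ] ℝ))) p :=
    fun j => (Complex.ofRealCLM.comp (EuclideanSpace.proj j : Ed d →L[ℝ] ℝ)).hasFDerivAt.mul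
      (Complex.ofRealCLM.comp (EuclideanSpace.proj j : Ed d →L[ℝ] ℝ)).hasFDerivAt
  have hsum : HasFDerivAt (fun q : Ed d => ∑ j, ((q j : ℂ) * (q j : ℂ)))
      (∑ j, ((p j : ℂ) • (Complex.ofRealCLM.comp (EuclideanSpace.proj j : Ed d →L[ℝ] ℝ))
        + (p j : ℂ) • (Complex.ofRealCLM.comp (EuclideanSpace.proj j : Ed d →L[ℝ] ℝ)))) p :=
    HasFDerivAt.fun_sum fun j _ => hj j
  have hc : HasFDerivAt (fun q : Ed d => ((1 - ‖q‖ ^ 2 : ℝ) : ℂ))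
      (-(∑ j, ((p j : ℂ) • (Complex.ofRealCLM.comp (EuclideanSpace.proj j : Ed d →L[ℝ] ℝ))
        + (p j : ℂ) • (Complex.ofRealCLM.comp (EuclideanSpace.proj j : Ed d →L[ℝ] ℝ))))) p := by
    rw [hrw]
    exact hsum.const_sub 1
  have hmul := (hc.mul hu.hasFDerivAt).fderiv
  rw [pd, show (fun q : Ed d => ((1 - ‖q‖ ^ 2 : ℝ) : ℂ) * u q) = (fun q : Ed d => ((1 - ‖q‖ ^ 2 : ℝ) : ℂ)) * u from rfl, hmul]
  simp only [ContinuousLinearMap.add_apply, ContinuousLinearMap.coe_smul', Pi.smul_apply,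
    ContinuousLinearMap.neg_apply, ContinuousLinearMap.coe_sum', Finset.sum_apply,
    ContinuousLinearMap.coe_comp', Function.comp_apply, Complex.ofRealCLM_apply,
    PiLp.proj_apply, smul_eq_mul]
  have hsingle : ∀ j : Fin d, ((EuclideanSpace.single i (1:ℝ)) j : ℂ) = if j = i then 1 else 0 := by
    intro j
    rw [EuclideanSpace.single_apply]
    split_ifs <;> simp
  simp only [hsingle]
  rw [show (∑ x : Fin d, (((p x : ℂ) * if x = i then 1 else 0) + (p x : ℂ) * if x = i then 1 else 0))
      = 2 * (p i : ℂ) by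
    rw [Finset.sum_congr rfl (fun j _ => show (((p j : ℂ) * if j = i then 1 else 0)
        + (p j : ℂ) * if j = i then 1 else 0) = if j = i then 2 * (p j : ℂ) else 0 by
      split_ifs <;> ring),
      Finset.sum_ite_eq' Finset.univ i (fun j => 2 * (p j : ℂ))]
    simp]
  have hpd : pd i u p = fderiv ℝ u p (EuclideanSpace.single i 1) := rfl
  rw [hpd]
  ring

/-- Fourier conjugate of the Legendre operator: ℱ L ℱ⁻¹ = L - (Δ + 1) + M. -/
theorem fourier_legendre (d : ℕ) (f : SchwartzMap (Ed d) ℂ) (p : Ed d) :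
    FT (legendreOp (⇑f)) p =
      legendreOp (FT (⇑f)) p - (lap (FT (⇑f)) p + FT (⇑f) p)
        + ((1 - ‖p‖ ^ 2 : ℝ) : ℂ) * FT (⇑f) p := by
  classical
  have hI : Complex.I ^ 2 = -1 := Complex.I_sq
  have hS : FT (⇑(∑ j, mS j (mS j f))) p = ∑ j, FT (⇑(mS j (mS j f))) p := FT_sum _ p
  have hterm : ∀ i : Fin d,
      FT (⇑(pdS i (pdS i f - ∑ j, mS j (mS j (pdS i f))))) p
        = 2 * Complex.I * (p i) * FT (⇑(mS i f)) p
          + (p i : ℂ) ^ 2 * (∑ j, FT (⇑(mS j (mS j f))) p)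
          - (p i : ℂ) ^ 2 * FT (⇑f) p := by
    intro i
    rw [FT_pd, FT_sub, FT_pd, FT_sum]
    have hj : ∀ j : Fin d, FT (⇑(mS j (mS j (pdS i f)))) p
        = Complex.I * (p i) * FT (⇑(mS j (mS j f))) p
          - (if i = j then (2 : ℂ) else 0) * FT (⇑(mS j f)) p := by
      intro j
      rw [key_comm, FT_sub, FT_pd, FT_smul]
      congr 1
      split_ifs <;> norm_num
    simp only [hj]
    rw [Finset.sum_sub_distrib, ← Finset.mul_sum]
    rw [show (∑ j, (if i = j then (2 : ℂ) else 0) * FT (⇑(mS j f)) p)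
        = 2 * FT (⇑(mS i f)) p by
      simp only [ite_mul, zero_mul]
      rw [Finset.sum_ite_eq Finset.univ i (fun j => 2 * FT (⇑(mS j f)) p)]
      simp]
    linear_combination ((p i : ℂ) ^ 2 * (FT (⇑f) p - ∑ j, FT (⇑(mS j (mS j f))) p)) * hI
  have hLHS : FT (legendreOp (⇑f)) p
      = (∑ i, 2 * Complex.I * (p i) * FT (⇑(mS i f)) p)
        + (∑ i, (p i : ℂ) ^ 2) * (∑ j, FT (⇑(mS j (mS j f))) p)
        - (∑ i, (p i : ℂ) ^ 2) * FT (⇑f) p := by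
    rw [legendre_coe, FT_sum]
    simp only [hterm]
    rw [Finset.sum_sub_distrib, Finset.sum_add_distrib, ← Finset.sum_mul, ← Finset.sum_mul]
  have hlapp : lap (FT ⇑f) p = -FT (⇑(∑ j, mS j (mS j f))) p := lap_FT f p
  have hlegterm : ∀ i : Fin d,
      pd i (fun y => ((1 - ‖y‖ ^ 2 : ℝ) : ℂ) * pd i (FT ⇑f) y) p
        = 2 * Complex.I * (p i) * FT (⇑(mS i f)) p
          + ((1 - ‖p‖ ^ 2 : ℝ) : ℂ) * (-FT (⇑(mS i (mS i f))) p) := by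
    intro i
    have hu : DifferentiableAt ℝ (pd i (FT ⇑f)) p := by
      rw [show pd i (FT ⇑f) = fun q => -Complex.I * FT (⇑(mS i f)) q from
        funext fun q => pd_FT f i q]
      exact ((FT_diff (mS i f)) p).const_mul _
    rw [pd_one_sub_normsq _ p hu i, pd_FT f i p, pd_pd_FT f i i p]
    ring
  have hleg : legendreOp (FT ⇑f) p
      = (∑ i, 2 * Complex.I * (p i) * FT (⇑(mS i f)) p)
        - ((1 - ‖p‖ ^ 2 : ℝ) : ℂ) * (∑ j, FT (⇑(mS j (mS j f))) p) := by
    rw [legendreOp]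
    simp only [hlegterm]
    rw [Finset.sum_add_distrib, sub_eq_add_neg]
    congr 1
    simp only [mul_neg]
    rw [Finset.sum_neg_distrib, ← Finset.mul_sum]
    ring
  rw [hLHS, hleg, hlapp, hS]
  rw [Complex.ofReal_sub, Complex.ofReal_one, normsq_coe]
  ring
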